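/- The subgroup K contains the third term γ₃(G) of the lower central series of G. -/

import Mathlib

open Equiv

/-! ## The binary rooted tree and the twisted twin of the Grigorchuk group

We identify the vertex set of the infinite rooted binary tree with `V = List Bool`
(the free monoid `X*` on `X = {0,1}`), and realize automorphisms of the tree as
permutations of `V`.  The generators `a, b, c, d` of the twisted twin `G` of the
Grigorchuk group are defined by the recursive rules
`a(xw) = (¬x)w`, `ψ(b) = (c,a)`, `ψ(c) = (a,d)`, `ψ(d) = (1,b)`. -/

abbrev V : Type := List Bool

def actA : V → V
  | [] => []
  | x :: w => (!x) :: w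

theorem actA_invol : Function.Involutive actA := fun w => by
  cases w with
  | nil => rfl
  | cons x w => simp [actA]

mutual
  def actB : V → V
    | [] => []
    | false :: w => false :: actC w
    | true :: w => true :: actA w
  def actC : V → V
    | [] => []
    | false :: w => false :: actA w
    | true :: w => true :: actD w
  def actD : V → V
    | [] => []
    | false :: w => false :: w
    | true :: w => true :: actB w
end

theorem act_invol3 (w : V) :
    actB (actB w) = w ∧ actC (actC w) = w ∧ actD (actD w) = w := by
  induction w with
  | nil => exact ⟨rfl, rfl, rfl⟩
  | cons x w ih =>
    cases x <;>
      exact ⟨by simp [actB, actC, actD, ih.1, ih.2.1, ih.2.2, actA_invol w],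
        by simp [actB, actC, actD, ih.1, ih.2.1, ih.2.2, actA_invol w],
        by simp [actB, actC, actD, ih.1, ih.2.1, ih.2.2, actA_invol w]⟩

theorem actB_invol : Function.Involutive actB := fun w => (act_invol3 w).1
theorem actC_invol : Function.Involutive actC := fun w => (act_invol3 w).2.1
theorem actD_invol : Function.Involutive actD := fun w => (act_invol3 w).2.2

/-- The generator `a`: the root swap. -/
def a : Perm V := actA_invol.toPerm actA
/-- The generator `b`, with `ψ(b) = (c, a)`. -/
def b : Perm V := actB_invol.toPerm actB
/-- The generator `c`, with `ψ(c) = (a, d)`. -/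
def c : Perm V := actC_invol.toPerm actC
/-- The generator `d`, with `ψ(d) = (1, b)`. -/
def d : Perm V := actD_invol.toPerm actD

@[simp] theorem coe_a : ⇑a = actA := rfl
@[simp] theorem coe_b : ⇑b = actB := rfl
@[simp] theorem coe_c : ⇑c = actC := rfl
@[simp] theorem coe_d : ⇑d = actD := rfl

/-- The twisted twin of the Grigorchuk group. -/
def G : Subgroup (Perm V) := Subgroup.closure {a, b, c, d}

theorem a_mem_G : a ∈ G := Subgroup.subset_closure (by simp)
theorem b_mem_G : b ∈ G := Subgroup.subset_closure (by simp)
theorem c_mem_G : c ∈ G := Subgroup.subset_closure (by simp)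
theorem d_mem_G : d ∈ G := Subgroup.subset_closure (by simp)

/-- `hasState g v s` says that the state (section) of `g` at the vertex `v` is `s`,
i.e. `g (v ++ w) = g v ++ s w` for all `w`. -/
def hasState (g : Perm V) (v : V) (s : Perm V) : Prop :=
  ∀ w : V, g (v ++ w) = g v ++ s w

def vstarFun (v : V) (f : V → V) : V → V :=
  fun w => if v <+: w then v ++ f (w.drop v.length) else w

theorem vstarFun_comp (v : V) (f f' : V → V) (w : V) :
    vstarFun v f (vstarFun v f' w) = vstarFun v (f ∘ f') w := by
  by_cases h : v <+: w
  · obtain ⟨t, rfl⟩ := h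
    simp [vstarFun, List.prefix_append, List.drop_left]
  · simp [vstarFun, h]

theorem vstarFun_id (v w : V) : vstarFun v id w = w := by
  by_cases h : v <+: w
  · obtain ⟨t, rfl⟩ := h
    simp [vstarFun, List.prefix_append, List.drop_left]
  · simp [vstarFun, h]

/-- `vstar v g` is the automorphism `v * g`, acting as `g` on the subtree rooted
at `v` and trivially elsewhere. -/
def vstar (v : V) (g : Perm V) : Perm V where
  toFun := vstarFun v g
  invFun := vstarFun v g.symm
  left_inv := fun w => by
    rw [vstarFun_comp, Equiv.symm_comp_self]
    exact vstarFun_id v w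
  right_inv := fun w => by
    rw [vstarFun_comp, Equiv.self_comp_symm]
    exact vstarFun_id v w

/-- `XstarSub n H` is the subgroup `Xⁿ * H`: the product of the copies `v * H`
over all vertices `v` of level `n` (equivalently, the subgroup they generate). -/
def XstarSub (n : ℕ) (H : Subgroup (Perm V)) : Subgroup (Perm V) :=
  Subgroup.closure {p | ∃ v : V, ∃ g : Perm V, v.length = n ∧ g ∈ H ∧ p = vstar v g}

/-- `pairPerm s₀ s₁ = ψ⁻¹(s₀, s₁)`: the first-level stabilizer element whose states
at the vertices `0` and `1` are `s₀` and `s₁`. -/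
def pairPerm (s₀ s₁ : Perm V) : Perm V := vstar [false] s₀ * vstar [true] s₁

/-- The permutations fixing every vertex of level `n`. -/
def stabLevel (n : ℕ) : Subgroup (Perm V) where
  carrier := {g : Perm V | ∀ v : V, v.length = n → g v = v}
  one_mem' := fun _ _ => rfl
  mul_mem' := by
    intro g h hg hh v hv
    show g (h v) = v
    rw [hh v hv, hg v hv]
  inv_mem' := by
    intro g hg v hv
    show g⁻¹ v = v
    conv_lhs => rw [← hg v hv]
    exact g.symm_apply_apply v

/-- The `n`-th level stabilizer `Stab_G(n)` of `G`. -/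
def stabG (n : ℕ) : Subgroup (Perm V) := G ⊓ stabLevel n

/-- The commutator `[x, y] = x⁻¹ y⁻¹ x y` (paper convention). -/
def pc (x y : Perm V) : Perm V := x⁻¹ * y⁻¹ * x * y
/-- Conjugation `xʸ = y⁻¹ x y`. -/
def cj (x y : Perm V) : Perm V := y⁻¹ * x * y

/-- The normal closure in `G` of a subset `S` of `G`. -/
def ncl (S : Set (Perm V)) : Subgroup (Perm V) :=
  Subgroup.closure {x | ∃ s ∈ S, ∃ g ∈ G, x = g⁻¹ * s * g}

/-- `K = ⟨[a,b],[b,c],[b,d],[c,d], bcd⟩^G`. -/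
def K : Subgroup (Perm V) := ncl {pc a b, pc b c, pc b d, pc c d, b * c * d}

/-- The subgroup `[K, G]`. -/
def KG : Subgroup (Perm V) := ⁅K, G⁆

/-- The subgroup `C`, generated by `[K,G]` and `[a,b][b,c]`. -/
def Csub : Subgroup (Perm V) := KG ⊔ Subgroup.closure {pc a b * pc b c}

/-- `γ_n(G)`, the `n`-th term of the lower central series of `G` (starting at `γ₁ = G`),
viewed as a subgroup of `Perm V`. -/
def gammaG (n : ℕ) : Subgroup (Perm V) :=
  Subgroup.map G.subtype (Subgroup.lowerCentralSeries (⊤ : Subgroup ↥G) (n - 1))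


open scoped commutatorElement

@[simp] theorem actAA (v : V) : actA (actA v) = v := actA_invol v
@[simp] theorem actBB (v : V) : actB (actB v) = v := actB_invol v
@[simp] theorem actCC (v : V) : actC (actC v) = v := actC_invol v
@[simp] theorem actDD (v : V) : actD (actD v) = v := actD_invol v
theorem actA_nil : actA [] = [] := rfl
theorem actA_cons (x : Bool) (w : V) : actA (x :: w) = (!x) :: w := rfl

set_option maxHeartbeats 2000000 in
theorem trivXA : ∀ v : V, actA (actC (actA (actC (actA (actC (actA (actC (actA (actB (actA (actB (actD (actC (actD (actA (actB (actA (actB (actA (actC (actB (actC (actB (actA (actC (v)))))))))))))))))))))))))) = v ∧ actA (actD (actA (actD (actC (actA (actB (actD (actB (actA (actC (actD (v)))))))))))) = v := by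
  intro v
  induction v with
  | nil => exact ⟨rfl, rfl⟩
  | cons x v ih =>
    obtain ⟨h1, h2⟩ := ih
    cases x
    · exact ⟨by simp only [actA_nil, actA_cons, actB, actC, actD, Bool.not_false, Bool.not_true, actAA, actBB, actCC, actDD], by simp only [actA_nil, actA_cons, actB, actC, actD, Bool.not_false, Bool.not_true, actAA, actBB, actCC, actDD]⟩
    · exact ⟨by simp only [actA_nil, actA_cons, actB, actC, actD, Bool.not_false, Bool.not_true, actAA, actBB, actCC, actDD, h2], by simp only [actA_nil, actA_cons, actB, actC, actD, Bool.not_false, Bool.not_true, actAA, actBB, actCC, actDD]⟩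

set_option maxHeartbeats 2000000 in
theorem trivXB : ∀ v : V, actA (actC (actA (actC (actB (actC (actA (actC (actA (actC (actB (actC (actA (actD (actC (actD (actC (actA (v)))))))))))))))))) = v ∧ actD (actA (actC (actA (actD (actA (actC (actA (actB (actD (actB (actD (v)))))))))))) = v ∧ actA (actD (actA (actD (actA (actD (actA (actD (v)))))))) = v := by
  intro v
  induction v with
  | nil => exact ⟨rfl, rfl, rfl⟩
  | cons x v ih =>
    obtain ⟨h1, h2, h3⟩ := ih
    cases x
    · exact ⟨by simp only [actA_nil, actA_cons, actB, actC, actD, Bool.not_false, Bool.not_true, actAA, actBB, actCC, actDD, h2], by simp only [actA_nil, actA_cons, actB, actC, actD, Bool.not_false, Bool.not_true, actAA, actBB, actCC, actDD], by simp only [actA_nil, actA_cons, actB, actC, actD, Bool.not_false, Bool.not_true, actAA, actBB, actCC, actDD]⟩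
    · exact ⟨by simp only [actA_nil, actA_cons, actB, actC, actD, Bool.not_false, Bool.not_true, actAA, actBB, actCC, actDD, h3], by simp only [actA_nil, actA_cons, actB, actC, actD, Bool.not_false, Bool.not_true, actAA, actBB, actCC, actDD], by simp only [actA_nil, actA_cons, actB, actC, actD, Bool.not_false, Bool.not_true, actAA, actBB, actCC, actDD]⟩

set_option maxHeartbeats 2000000 in
theorem trivXD : ∀ v : V, actA (actC (actA (actC (actD (actC (actA (actC (actA (actB (actC (actD (actC (actB (v)))))))))))))) = v := by
  intro v
  induction v with
  | nil => rfl
  | cons x v ih =>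
    have h1 := ih
    cases x
    · exact by simp only [actA_nil, actA_cons, actB, actC, actD, Bool.not_false, Bool.not_true, actAA, actBB, actCC, actDD]
    · exact by simp only [actA_nil, actA_cons, actB, actC, actD, Bool.not_false, Bool.not_true, actAA, actBB, actCC, actDD]

set_option maxHeartbeats 2000000 in
theorem trivYA : ∀ v : V, actA (actD (actA (actD (actA (actD (actA (actD (v)))))))) = v := by
  intro v
  induction v with
  | nil => rfl
  | cons x v ih =>
    have h1 := ih
    cases x
    · exact by simp only [actA_nil, actA_cons, actB, actC, actD, Bool.not_false, Bool.not_true, actAA, actBB, actCC, actDD]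
    · exact by simp only [actA_nil, actA_cons, actB, actC, actD, Bool.not_false, Bool.not_true, actAA, actBB, actCC, actDD]

set_option maxHeartbeats 2000000 in
theorem trivYB : ∀ v : V, actA (actD (actA (actD (actB (actD (actB (actA (actD (actA (actB (actD (actB (actD (v)))))))))))))) = v := by
  intro v
  induction v with
  | nil => rfl
  | cons x v ih =>
    have h1 := ih
    cases x
    · exact by simp only [actA_nil, actA_cons, actB, actC, actD, Bool.not_false, Bool.not_true, actAA, actBB, actCC, actDD]
    · exact by simp only [actA_nil, actA_cons, actB, actC, actD, Bool.not_false, Bool.not_true, actAA, actBB, actCC, actDD]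

set_option maxHeartbeats 2000000 in
theorem trivYC : ∀ v : V, actA (actD (actA (actD (actC (actD (actA (actD (actA (actD (actC (actD (actA (actB (actD (actB (actD (actA (v)))))))))))))))))) = v := by
  intro v
  induction v with
  | nil => rfl
  | cons x v ih =>
    have h1 := ih
    cases x
    · exact by simp only [actA_nil, actA_cons, actB, actC, actD, Bool.not_false, Bool.not_true, actAA, actBB, actCC, actDD]
    · exact by simp only [actA_nil, actA_cons, actB, actC, actD, Bool.not_false, Bool.not_true, actAA, actBB, actCC, actDD]
theorem a_mul_a : a * a = 1 := Equiv.ext fun v => actAA v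
theorem b_mul_b : b * b = 1 := Equiv.ext fun v => actBB v
theorem c_mul_c : c * c = 1 := Equiv.ext fun v => actCC v
theorem d_mul_d : d * d = 1 := Equiv.ext fun v => actDD v
theorem a_inv : a⁻¹ = a := inv_eq_of_mul_eq_one_right a_mul_a
theorem b_inv : b⁻¹ = b := inv_eq_of_mul_eq_one_right b_mul_b
theorem c_inv : c⁻¹ = c := inv_eq_of_mul_eq_one_right c_mul_c
theorem d_inv : d⁻¹ = d := inv_eq_of_mul_eq_one_right d_mul_d

theorem mem_K_conj {s : Perm V} (hs : s ∈ ({pc a b, pc b c, pc b d, pc c d, b * c * d} : Set (Perm V)))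
    {g : Perm V} (hg : g ∈ G) : g⁻¹ * s * g ∈ K :=
  Subgroup.subset_closure ⟨s, hs, g, hg, rfl⟩

theorem mem_K_base {s : Perm V} (hs : s ∈ ({pc a b, pc b c, pc b d, pc c d, b * c * d} : Set (Perm V)))
    : s ∈ K := by
  have h := mem_K_conj hs (one_mem G)
  simpa using h

theorem memK_xa : ⁅⁅a,c⁆,a⁆ ∈ K := by
  have heq : ⁅⁅a,c⁆,a⁆ * (((a*c)⁻¹ * (pc b c) * (a*c)) * ((c)⁻¹ * (pc a b) * (c))⁻¹ * (pc c d) * (pc a b)⁻¹)⁻¹ = 1 :=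
    Equiv.ext fun v => by
      simp only [commutatorElement_def, pc, mul_inv_rev, inv_inv, a_inv, b_inv, c_inv, d_inv,
        Perm.mul_apply, Perm.one_apply, coe_a, coe_b, coe_c, coe_d, actAA, actBB, actCC, actDD]
      exact (trivXA v).1
  rw [mul_inv_eq_one.mp heq]
  exact (mul_mem (mul_mem (mul_mem (mem_K_conj (by simp) (mul_mem a_mem_G c_mem_G)) (inv_mem (mem_K_conj (by simp) c_mem_G))) (mem_K_base (by simp))) (inv_mem (mem_K_base (by simp))))

theorem memK_xb : ⁅⁅a,c⁆,b⁆ ∈ K := by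
  have heq : ⁅⁅a,c⁆,b⁆ * (((a)⁻¹ * (pc c d) * (a)) * (pc b c)⁻¹)⁻¹ = 1 :=
    Equiv.ext fun v => by
      simp only [commutatorElement_def, pc, mul_inv_rev, inv_inv, a_inv, b_inv, c_inv, d_inv,
        Perm.mul_apply, Perm.one_apply, coe_a, coe_b, coe_c, coe_d, actAA, actBB, actCC, actDD]
      exact (trivXB v).1
  rw [mul_inv_eq_one.mp heq]
  exact (mul_mem (mem_K_conj (by simp) a_mem_G) (inv_mem (mem_K_base (by simp))))

theorem memK_xc : ⁅⁅a,c⁆,c⁆ ∈ K := by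
  have heq : ⁅⁅a,c⁆,c⁆ * (((a*c)⁻¹ * (pc b c) * (a*c)) * ((c)⁻¹ * (pc a b) * (c))⁻¹ * (pc c d) * (pc a b)⁻¹)⁻¹ = 1 :=
    Equiv.ext fun v => by
      simp only [commutatorElement_def, pc, mul_inv_rev, inv_inv, a_inv, b_inv, c_inv, d_inv,
        Perm.mul_apply, Perm.one_apply, coe_a, coe_b, coe_c, coe_d, actAA, actBB, actCC, actDD]
      exact (trivXA v).1
  rw [mul_inv_eq_one.mp heq]
  exact (mul_mem (mul_mem (mul_mem (mem_K_conj (by simp) (mul_mem a_mem_G c_mem_G)) (inv_mem (mem_K_conj (by simp) c_mem_G))) (mem_K_base (by simp))) (inv_mem (mem_K_base (by simp))))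

theorem memK_xd : ⁅⁅a,c⁆,d⁆ ∈ K := by
  have heq : ⁅⁅a,c⁆,d⁆ * (((c*b)⁻¹ * (b * c * d) * (c*b))⁻¹ * ((c*b)⁻¹ * (b * c * d) * (c*b))⁻¹ * (pc b c))⁻¹ = 1 :=
    Equiv.ext fun v => by
      simp only [commutatorElement_def, pc, mul_inv_rev, inv_inv, a_inv, b_inv, c_inv, d_inv,
        Perm.mul_apply, Perm.one_apply, coe_a, coe_b, coe_c, coe_d, actAA, actBB, actCC, actDD]
      exact (trivXD v)
  rw [mul_inv_eq_one.mp heq]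
  exact (mul_mem (mul_mem (inv_mem (mem_K_conj (by simp) (mul_mem c_mem_G b_mem_G))) (inv_mem (mem_K_conj (by simp) (mul_mem c_mem_G b_mem_G)))) (mem_K_base (by simp)))

theorem memK_yb : ⁅⁅a,d⁆,b⁆ ∈ K := by
  have heq : ⁅⁅a,d⁆,b⁆ * ((pc b d)⁻¹ * ((d*a)⁻¹ * (pc a b) * (d*a)) * ((a)⁻¹ * (pc b d) * (a))⁻¹ * (pc a b))⁻¹ = 1 :=
    Equiv.ext fun v => by
      simp only [commutatorElement_def, pc, mul_inv_rev, inv_inv, a_inv, b_inv, c_inv, d_inv,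
        Perm.mul_apply, Perm.one_apply, coe_a, coe_b, coe_c, coe_d, actAA, actBB, actCC, actDD]
      exact (trivYB v)
  rw [mul_inv_eq_one.mp heq]
  exact (mul_mem (mul_mem (mul_mem (inv_mem (mem_K_base (by simp))) (mem_K_conj (by simp) (mul_mem d_mem_G a_mem_G))) (inv_mem (mem_K_conj (by simp) a_mem_G))) (mem_K_base (by simp)))

theorem memK_yc : ⁅⁅a,d⁆,c⁆ ∈ K := by
  have heq : ⁅⁅a,d⁆,c⁆ * (((a)⁻¹ * (pc b d) * (a))⁻¹ * (pc c d)⁻¹)⁻¹ = 1 :=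
    Equiv.ext fun v => by
      simp only [commutatorElement_def, pc, mul_inv_rev, inv_inv, a_inv, b_inv, c_inv, d_inv,
        Perm.mul_apply, Perm.one_apply, coe_a, coe_b, coe_c, coe_d, actAA, actBB, actCC, actDD]
      exact (trivYC v)
  rw [mul_inv_eq_one.mp heq]
  exact (mul_mem (inv_mem (mem_K_conj (by simp) a_mem_G)) (inv_mem (mem_K_base (by simp))))

theorem memK_ya : ⁅⁅a,d⁆,a⁆ ∈ K := by
  have heq : ⁅⁅a,d⁆,a⁆ = 1 :=
    Equiv.ext fun v => by
      simp only [commutatorElement_def, pc, mul_inv_rev, inv_inv, a_inv, b_inv, c_inv, d_inv,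
        Perm.mul_apply, Perm.one_apply, coe_a, coe_b, coe_c, coe_d, actAA, actBB, actCC, actDD]
      exact trivYA v
  rw [heq]; exact one_mem K

theorem memK_yd : ⁅⁅a,d⁆,d⁆ ∈ K := by
  have heq : ⁅⁅a,d⁆,d⁆ = 1 :=
    Equiv.ext fun v => by
      simp only [commutatorElement_def, pc, mul_inv_rev, inv_inv, a_inv, b_inv, c_inv, d_inv,
        Perm.mul_apply, Perm.one_apply, coe_a, coe_b, coe_c, coe_d, actAA, actBB, actCC, actDD]
      exact trivYA v
  rw [heq]; exact one_mem K
theorem commK_ab : ⁅a,b⁆ ∈ K := by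
  have h : ⁅a,b⁆ = pc a b := by rw [commutatorElement_def, pc, a_inv, b_inv]
  rw [h]; exact mem_K_base (by simp)
theorem commK_bc : ⁅b,c⁆ ∈ K := by
  have h : ⁅b,c⁆ = pc b c := by rw [commutatorElement_def, pc, b_inv, c_inv]
  rw [h]; exact mem_K_base (by simp)
theorem commK_bd : ⁅b,d⁆ ∈ K := by
  have h : ⁅b,d⁆ = pc b d := by rw [commutatorElement_def, pc, b_inv, d_inv]
  rw [h]; exact mem_K_base (by simp)
theorem commK_cd : ⁅c,d⁆ ∈ K := by
  have h : ⁅c,d⁆ = pc c d := by rw [commutatorElement_def, pc, c_inv, d_inv]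
  rw [h]; exact mem_K_base (by simp)

theorem K_conj_mem {k : Perm V} (hk : k ∈ K) {g : Perm V} (hg : g ∈ G) : g⁻¹ * k * g ∈ K := by
  induction hk using Subgroup.closure_induction with
  | mem x hx =>
    obtain ⟨s, hs, h, hh, rfl⟩ := hx
    exact Subgroup.subset_closure ⟨s, hs, h * g, mul_mem hh hg, by group⟩
  | one =>
    have h : g⁻¹ * 1 * g = 1 := by group
    rw [h]; exact one_mem K
  | mul x y hx hy ihx ihy =>
    have h : g⁻¹ * (x * y) * g = (g⁻¹ * x * g) * (g⁻¹ * y * g) := by group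
    rw [h]; exact mul_mem ihx ihy
  | inv x hx ihx =>
    have h : g⁻¹ * x⁻¹ * g = (g⁻¹ * x * g)⁻¹ := by group
    rw [h]; exact inv_mem ihx

def K' : Subgroup (↥G) := K.comap G.subtype

instance K'_normal : K'.Normal := by
  constructor
  intro n hn g
  have hn' : (↑n : Perm V) ∈ K := hn
  have h := K_conj_mem hn' (inv_mem g.2)
  rw [inv_inv] at h
  show (↑(g * n * g⁻¹) : Perm V) ∈ K
  simpa using h

def aG : ↥G := ⟨a, a_mem_G⟩
def bG : ↥G := ⟨b, b_mem_G⟩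
def cG : ↥G := ⟨c, c_mem_G⟩
def dG : ↥G := ⟨d, d_mem_G⟩

theorem hGtop : Subgroup.closure ({aG, bG, cG, dG} : Set ↥G) = ⊤ := by
  apply Subgroup.map_injective G.subtype_injective
  rw [MonoidHom.map_closure]
  have himg : G.subtype '' {aG, bG, cG, dG} = {a, b, c, d} := by
    simp [Set.image_insert_eq, aG, bG, cG, dG]
  rw [himg, ← MonoidHom.range_eq_map, Subgroup.range_subtype]
  rfl

def Qq : Type := ↥G ⧸ K'
instance : Group Qq := by unfold Qq; infer_instance
def π : ↥G →* Qq := QuotientGroup.mk' K'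

theorem hQtop : Subgroup.closure (π '' ({aG, bG, cG, dG} : Set ↥G)) = ⊤ := by
  rw [← MonoidHom.map_closure, hGtop]
  exact Subgroup.map_top_of_surjective π (QuotientGroup.mk'_surjective K')

theorem pi_one_of_memK {x : ↥G} (hx : (↑x : Perm V) ∈ K) : π x = 1 :=
  (QuotientGroup.eq_one_iff x).2 hx

theorem cent_ac : ⁅π aG, π cG⁆ ∈ Subgroup.center Qq := by
  rw [Subgroup.mem_center_iff]
  intro g
  have hg : g ∈ Subgroup.closure (π '' ({aG, bG, cG, dG} : Set ↥G)) := by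
    rw [hQtop]; exact Subgroup.mem_top g
  induction hg using Subgroup.closure_induction with
  | mem u hu =>
    have key : ∀ w : ↥G, (↑(⁅⁅aG, cG⁆, w⁆) : Perm V) ∈ K →
        π w * ⁅π aG, π cG⁆ = ⁅π aG, π cG⁆ * π w := by
      intro w hw
      have h1 : π ⁅⁅aG, cG⁆, w⁆ = 1 := pi_one_of_memK hw
      rw [map_commutatorElement, map_commutatorElement] at h1
      exact (commutatorElement_eq_one_iff_commute.mp h1).symm.eq
    obtain ⟨w, hw, rfl⟩ := hu
    simp only [Set.mem_insert_iff, Set.mem_singleton_iff] at hw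
    rcases hw with rfl | rfl | rfl | rfl
    · exact key aG memK_xa
    · exact key bG memK_xb
    · exact key cG memK_xc
    · exact key dG memK_xd
  | one => rw [one_mul, mul_one]
  | mul x y hx hy ihx ihy => rw [mul_assoc, ihy, ← mul_assoc, ihx, mul_assoc]
  | inv x hx ihx => exact Commute.inv_left ihx

theorem cent_ad : ⁅π aG, π dG⁆ ∈ Subgroup.center Qq := by
  rw [Subgroup.mem_center_iff]
  intro g
  have hg : g ∈ Subgroup.closure (π '' ({aG, bG, cG, dG} : Set ↥G)) := by
    rw [hQtop]; exact Subgroup.mem_top g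
  induction hg using Subgroup.closure_induction with
  | mem u hu =>
    have key : ∀ w : ↥G, (↑(⁅⁅aG, dG⁆, w⁆) : Perm V) ∈ K →
        π w * ⁅π aG, π dG⁆ = ⁅π aG, π dG⁆ * π w := by
      intro w hw
      have h1 : π ⁅⁅aG, dG⁆, w⁆ = 1 := pi_one_of_memK hw
      rw [map_commutatorElement, map_commutatorElement] at h1
      exact (commutatorElement_eq_one_iff_commute.mp h1).symm.eq
    obtain ⟨w, hw, rfl⟩ := hu
    simp only [Set.mem_insert_iff, Set.mem_singleton_iff] at hw
    rcases hw with rfl | rfl | rfl | rfl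
    · exact key aG memK_ya
    · exact key bG memK_yb
    · exact key cG memK_yc
    · exact key dG memK_yd
  | one => rw [one_mul, mul_one]
  | mul x y hx hy ihx ihy => rw [mul_assoc, ihy, ← mul_assoc, ihx, mul_assoc]
  | inv x hx ihx => exact Commute.inv_left ihx

theorem pairs_central : ∀ s ∈ π '' ({aG, bG, cG, dG} : Set ↥G),
    ∀ t ∈ π '' ({aG, bG, cG, dG} : Set ↥G), ⁅s, t⁆ ∈ Subgroup.center Qq := by
  have hone : ∀ p q : ↥G, (↑⁅p, q⁆ : Perm V) ∈ K → ⁅π p, π q⁆ ∈ Subgroup.center Qq := by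
    intro p q h
    rw [← map_commutatorElement, pi_one_of_memK h]
    exact one_mem _
  have hself : ∀ p : ↥G, ⁅π p, π p⁆ ∈ Subgroup.center Qq := by
    intro p
    have h : ⁅π p, π p⁆ = 1 := by rw [commutatorElement_def]; group
    rw [h]; exact one_mem _
  have hswap : ∀ p q : ↥G, ⁅π p, π q⁆ ∈ Subgroup.center Qq →
      ⁅π q, π p⁆ ∈ Subgroup.center Qq := by
    intro p q h
    rw [← commutatorElement_inv]; exact inv_mem h
  rintro s ⟨u, hu, rfl⟩ t ⟨w, hw, rfl⟩
  simp only [Set.mem_insert_iff, Set.mem_singleton_iff] at hu hw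
  rcases hu with rfl | rfl | rfl | rfl
  · rcases hw with rfl | rfl | rfl | rfl
    · exact hself _
    · exact hone _ _ commK_ab
    · exact cent_ac
    · exact cent_ad
  · rcases hw with rfl | rfl | rfl | rfl
    · exact hswap _ _ (hone _ _ commK_ab)
    · exact hself _
    · exact hone _ _ commK_bc
    · exact hone _ _ commK_bd
  · rcases hw with rfl | rfl | rfl | rfl
    · exact hswap _ _ cent_ac
    · exact hswap _ _ (hone _ _ commK_bc)
    · exact hself _
    · exact hone _ _ commK_cd
  · rcases hw with rfl | rfl | rfl | rfl
    · exact hswap _ _ cent_ad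
    · exact hswap _ _ (hone _ _ commK_bd)
    · exact hswap _ _ (hone _ _ commK_cd)
    · exact hself _

theorem comm_center_gen : ∀ s ∈ π '' ({aG, bG, cG, dG} : Set ↥G),
    ∀ y : Qq, ⁅s, y⁆ ∈ Subgroup.center Qq := by
  intro s hs y
  have hy : y ∈ Subgroup.closure (π '' ({aG, bG, cG, dG} : Set ↥G)) := by
    rw [hQtop]; exact Subgroup.mem_top y
  induction hy using Subgroup.closure_induction with
  | mem t ht => exact pairs_central s hs t ht
  | one => rw [commutatorElement_one_right]; exact one_mem _
  | mul y z hy hz ihy ihz =>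
    have hid : ⁅s, y * z⁆ = ⁅s, y⁆ * (y * ⁅s, z⁆ * y⁻¹) := by
      simp only [commutatorElement_def]; group
    have h1 := Subgroup.mem_center_iff.1 ihz y
    rw [hid, h1, mul_inv_cancel_right]
    exact mul_mem ihy ihz
  | inv y hy ihy =>
    have hid : ⁅s, y⁻¹⁆ = y⁻¹ * ⁅s, y⁆⁻¹ * y := by
      simp only [commutatorElement_def]; group
    have h1 := Subgroup.mem_center_iff.1 (inv_mem ihy) y⁻¹
    rw [hid, h1, inv_mul_cancel_right]
    exact inv_mem ihy

theorem comm_center_all : ∀ x y : Qq, ⁅x, y⁆ ∈ Subgroup.center Qq := by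
  intro x y
  have hx : x ∈ Subgroup.closure (π '' ({aG, bG, cG, dG} : Set ↥G)) := by
    rw [hQtop]; exact Subgroup.mem_top x
  induction hx using Subgroup.closure_induction with
  | mem s hs => exact comm_center_gen s hs y
  | one => rw [commutatorElement_one_left]; exact one_mem _
  | mul x z hx hz ihx ihz =>
    have hid : ⁅x * z, y⁆ = (x * ⁅z, y⁆ * x⁻¹) * ⁅x, y⁆ := by
      simp only [commutatorElement_def]; group
    have h1 := Subgroup.mem_center_iff.1 ihz x
    rw [hid, h1, mul_inv_cancel_right]
    exact mul_mem ihz ihx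
  | inv x hx ihx =>
    have hid : ⁅x⁻¹, y⁆ = x⁻¹ * ⁅x, y⁆⁻¹ * x := by
      simp only [commutatorElement_def]; group
    have h1 := Subgroup.mem_center_iff.1 (inv_mem ihx) x⁻¹
    rw [hid, h1, inv_mul_cancel_right]
    exact inv_mem ihx

theorem lcs2_le_K' : Subgroup.lowerCentralSeries (⊤ : Subgroup ↥G) 2 ≤ K' := by
  have hdef : Subgroup.lowerCentralSeries (⊤ : Subgroup ↥G) 2 = ⁅Subgroup.lowerCentralSeries (⊤ : Subgroup ↥G) 1, (⊤ : Subgroup ↥G)⁆ := rfl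
  rw [hdef, Subgroup.commutator_le]
  intro h hh z _
  have hπh : π h ∈ Subgroup.center Qq := by
    have hmap : Subgroup.map π ⁅(⊤ : Subgroup ↥G), ⊤⁆ ≤ Subgroup.center Qq := by
      rw [Subgroup.map_commutator, Subgroup.commutator_le]
      intro p _ q _
      exact comm_center_all p q
    have hh' : h ∈ ⁅(⊤ : Subgroup ↥G), (⊤ : Subgroup ↥G)⁆ := hh
    exact hmap (Subgroup.mem_map.2 ⟨h, hh', rfl⟩)
  have hone : π ⁅h, z⁆ = 1 := by
    rw [map_commutatorElement]
    exact commutatorElement_eq_one_iff_commute.2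
      ((Subgroup.mem_center_iff.1 hπh (π z)).symm)
  exact (QuotientGroup.eq_one_iff _).1 hone

/-- **Proposition.** `K` contains `γ₃(G)`. -/
theorem stmt4 : gammaG 3 ≤ K := by
  have h1 : gammaG 3 = Subgroup.map G.subtype (Subgroup.lowerCentralSeries (⊤ : Subgroup ↥G) 2) := rfl
  rw [h1]
  exact le_trans (Subgroup.map_mono lcs2_le_K') (Subgroup.map_comap_le _ _)
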